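/- For every natural number k ≥ 1, all natural numbers x, y, z, and every choice of bits b_1, …, b_k ∈ {0,1}, letting w = ∑_{l=1}^{k} b_l · 2^{k-l}, one has e(z·w / 2^k) · ∏_{l=1}^{k} e(b_l · (y mod 2^l)·x / 2^l) = e((((z + y·x) mod 2^k)·w) / 2^k). (This is the correctness of the hybrid quantum multiply-add circuit: multiplying the w-indexed amplitude phase of QFT|z⟩ by the phases contributed by the operator M(y,x) = M_1(y,x) ⊗ ⋯ ⊗ M_k(y,x) yields the w-indexed amplitude phase of QFT|(z + y·x) mod 2^k⟩, so that applying QFT† and measuring returns z + y·x modulo 2^k.) -/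

import Mathlib

/-- `e θ = exp(2πiθ)`. -/
noncomputable def e (θ : ℝ) : ℂ := Complex.exp (2 * Real.pi * Complex.I * θ)

lemma e_add (a c : ℝ) : e (a + c) = e a * e c := by
  unfold e
  rw [← Complex.exp_add]
  push_cast
  ring_nf

lemma e_int (n : ℤ) : e n = 1 := by
  unfold e
  rw [show (2 * Real.pi * Complex.I * (n : ℝ) : ℂ) = (n : ℤ) * (2 * Real.pi * Complex.I) by
    push_cast; ring]
  exact Complex.exp_int_mul_two_pi_mul_I n

lemma e_add_int (a : ℝ) (n : ℤ) : e (a + n) = e a := by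
  rw [e_add, e_int, mul_one]

lemma e_sum {ι : Type*} (s : Finset ι) (f : ι → ℝ) :
    e (∑ i ∈ s, f i) = ∏ i ∈ s, e (f i) := by
  classical
  induction s using Finset.induction with
  | empty => simp [e]
  | insert _ _ h ih =>
      rw [Finset.sum_insert h, Finset.prod_insert h, e_add, ih]

/-- Correctness of the hybrid quantum multiply-add circuit: for `k ≥ 1`, all
`x y z : ℕ`, and bits `b 1, …, b k ∈ {0,1}` with `w = ∑_{l=1}^k b l * 2^(k-l)`,
`e(z·w / 2^k) · ∏_{l=1}^k e(b l · (y mod 2^l)·x / 2^l)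
  = e((((z + y·x) mod 2^k)·w) / 2^k)`. -/
theorem qmac_correctness (k x y z : ℕ) (hk : 1 ≤ k) (b : ℕ → ℕ)
    (hb : ∀ l ∈ Finset.Icc 1 k, b l = 0 ∨ b l = 1)
    (w : ℕ) (hw : w = ∑ l ∈ Finset.Icc 1 k, b l * 2 ^ (k - l)) :
    e (((z * w : ℕ) : ℝ) / (2 ^ k : ℝ)) *
        ∏ l ∈ Finset.Icc 1 k, e (((b l * (y % 2 ^ l) * x : ℕ) : ℝ) / (2 ^ l : ℝ)) =
      e (((((z + y * x) % 2 ^ k) * w : ℕ) : ℝ) / (2 ^ k : ℝ)) := by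
  have h2k : (0:ℝ) < (2:ℝ) ^ k := by positivity
  -- Step A: rewrite each factor with denominator 2^k
  have hterm : ∀ l ∈ Finset.Icc 1 k,
      e (((b l * (y % 2 ^ l) * x : ℕ) : ℝ) / (2 ^ l : ℝ)) =
      e (((b l * y * x * 2 ^ (k - l) : ℕ) : ℝ) / (2 ^ k : ℝ)) := by
    intro l hl
    obtain ⟨hl1, hlk⟩ := Finset.mem_Icc.mp hl
    have hkl : l + (k - l) = k := by omega
    obtain ⟨d, hd⟩ : ∃ d, y / 2 ^ l = d := ⟨_, rfl⟩
    have hmdR : ((y % 2 ^ l : ℕ) : ℝ) = (y : ℝ) - 2 ^ l * (d : ℝ) := by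
      have h := congrArg (Nat.cast : ℕ → ℝ) (Nat.mod_add_div y (2 ^ l))
      rw [hd] at h
      push_cast at h
      linarith
    have h2e : (2:ℝ) ^ k = 2 ^ l * 2 ^ (k - l) := by rw [← pow_add, hkl]
    have key : ((b l * (y % 2 ^ l) * x : ℕ) : ℝ) / (2 ^ l : ℝ) =
        ((b l * y * x * 2 ^ (k - l) : ℕ) : ℝ) / (2 ^ k : ℝ)
          + ((-(b l * x * d : ℕ) : ℤ) : ℝ) := by
      push_cast [hmdR]
      rw [h2e]
      have hl0 : (2:ℝ) ^ l ≠ 0 := by positivity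
      have hkl0 : (2:ℝ) ^ (k - l) ≠ 0 := by positivity
      field_simp
      ring
    rw [key, e_add_int]
  rw [Finset.prod_congr rfl hterm, ← e_sum]
  -- Step B: the sum equals y*x*w / 2^k
  have hsum : (∑ l ∈ Finset.Icc 1 k, ((b l * y * x * 2 ^ (k - l) : ℕ) : ℝ) / (2 ^ k : ℝ))
      = ((y * x * w : ℕ) : ℝ) / (2 ^ k : ℝ) := by
    rw [hw, ← Finset.sum_div]
    congr 1
    push_cast [Finset.mul_sum]
    exact Finset.sum_congr rfl fun l _ => by ring
  rw [hsum, ← e_add]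
  -- Step C: reduce modulo 2^k
  obtain ⟨q, hq⟩ : ∃ q, (z + y * x) / 2 ^ k = q := ⟨_, rfl⟩
  have hmod : ((z * w : ℕ) : ℝ) / (2 ^ k : ℝ) + ((y * x * w : ℕ) : ℝ) / (2 ^ k : ℝ)
      = ((((z + y * x) % 2 ^ k) * w : ℕ) : ℝ) / (2 ^ k : ℝ)
        + (((q * w : ℕ) : ℤ) : ℝ) := by
    have h := congrArg (Nat.cast : ℕ → ℝ) (Nat.mod_add_div (z + y * x) (2 ^ k))
    rw [hq] at h
    push_cast at h ⊢
    field_simp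
    nlinarith [h]
  rw [hmod, e_add_int]
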